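/- Let (V, μ) be a weighted graph with a rooted spanning tree satisfying μ(S_t) ≤ c·μ(t) for all t. Then for every f ∈ ℓ¹(V,μ) with Σ_{s∈V} f(s)μ(s) = 0, one has ‖f‖_{ℓ¹(V,μ)} ≤ 2c · ‖|∇f|‖_{ℓ¹(V,μ)}, where |∇f|(t) = Σ_{s∼t} |f(s)−f(t)|. -/

import Mathlib

/-- Rooted spanning tree encoded by a parent map: `s ⪰ t` iff `∃ n, p^[n] s = t`;
the shadow of `t` is `S_t = {s | s ⪰ t}`. -/
def shadow {V : Type*} (p : V → V) (t : V) : Set V :=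
  {s | ∃ n : ℕ, p^[n] s = t}

/-- The length of the gradient of `f` at `t`: `|∇f|(t) = ∑_{s ~ t} |f(s) - f(t)|`. -/
noncomputable def gradLen {V : Type*} (G : SimpleGraph V) (f : V → ℝ) (t : V) : ℝ :=
  ∑' s : {s : V // G.Adj t s}, |f s.1 - f t|

/-- Global `ℓ¹`-Poincaré inequality: on a weighted connected locally finite graph with a
rooted spanning tree satisfying the John condition `μ(S_t) ≤ c μ(t)`, every mean-zero
`f ∈ ℓ¹(V,μ)` satisfies `‖f‖_{ℓ¹(V,μ)} ≤ 2c ‖|∇f|‖_{ℓ¹(V,μ)}`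
(the right-hand side is computed in `[0,∞]`). -/
private lemma telescope_abs {V : Type*} (f : V → ℝ) (p : V → V) (s : V) :
    ∀ m : ℕ, |f s - f (p^[m] s)| ≤ ∑ k ∈ Finset.range m, |f (p^[k] s) - f (p^[k+1] s)| := by
  intro m
  induction m with
  | zero => simp
  | succ m ih =>
    rw [Finset.sum_range_succ]
    have h := abs_sub_le (f s) (f (p^[m] s)) (f (p^[m+1] s))
    linarith

theorem global_poincare_one {V : Type*} [Countable V] (G : SimpleGraph V) (hG : G.Connected)
    (hlf : ∀ t : V, {s : V | G.Adj t s}.Finite)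
    (pa : V → V) (a : V)
    (hroot : pa a = a) (hreach : ∀ t : V, ∃ n : ℕ, pa^[n] t = a)
    (htree : ∀ t : V, t ≠ a → G.Adj t (pa t))
    (μ : V → ℝ) (hμpos : ∀ t, 0 < μ t) (hμsum : Summable μ)
    (c : ℝ) (hc : 0 < c)
    (hjohn : ∀ t : V, (∑' s : shadow pa t, μ s.1) ≤ c * μ t)
    (f : V → ℝ) (hf : Summable fun s => |f s| * μ s)
    (hmean : (∑' s : V, f s * μ s) = 0) :
    (∑' s : V, ENNReal.ofReal (|f s| * μ s)) ≤
      ENNReal.ofReal (2 * c) * ∑' t : V, ENNReal.ofReal (gradLen G f t * μ t) := by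
  classical
  -- minimal escape time
  let n : V → ℕ := fun s => Nat.find (hreach s)
  have hna : ∀ s, pa^[n s] s = a := fun s => Nat.find_spec (hreach s)
  have hnmin : ∀ s k, k < n s → pa^[k] s ≠ a := fun s k hk => Nat.find_min (hreach s) hk
  have hfixa : ∀ k : ℕ, pa^[k] a = a := fun k => Function.iterate_fixed hroot k
  -- injectivity on path
  have hstep : ∀ s i j, i < j → j < n s → pa^[i] s ≠ pa^[j] s := by
    intro s i j hij hj heq
    have h1 : pa^[n s - j + i] s = a := by
      have : pa^[n s - j + i] s = pa^[n s - j] (pa^[i] s) := by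
        rw [Function.iterate_add_apply]
      rw [heq, ← Function.iterate_add_apply] at this
      have hnj : n s - j + j = n s := by omega
      rw [hnj] at this
      rw [this, hna s]
    exact hnmin s _ (by omega) h1
  have hinj : ∀ s, Set.InjOn (fun k => pa^[k] s) (Finset.range (n s)) := by
    intro s i hi j hj heq
    simp only [Finset.coe_range, Set.mem_Iio] at hi hj
    rcases lt_trichotomy i j with h | h | h
    · exact absurd heq (hstep s i j h hj)
    · exact h
    · exact absurd heq.symm (hstep s j i h hi)
  -- basic facts
  have hgradnn : ∀ t, 0 ≤ gradLen G f t := fun t =>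
    tsum_nonneg (fun s => abs_nonneg _)
  -- edge weight
  set E : V → ENNReal := fun t => if t = a then 0 else ENNReal.ofReal |f t - f (pa t)| with hE
  set H : V → V → ENNReal := fun s t =>
    (if ∃ k : ℕ, pa^[k] s = t then E t else 0) * ENNReal.ofReal (μ s) with hH
  -- Claim A
  have claimA : ∀ s, ENNReal.ofReal (|f s - f a| * μ s) ≤ ∑' t, H s t := by
    intro s
    have h1 : ENNReal.ofReal (|f s - f a| * μ s)
        = ENNReal.ofReal |f s - f a| * ENNReal.ofReal (μ s) :=
      ENNReal.ofReal_mul (abs_nonneg _)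
    rw [h1]
    have h2 : ENNReal.ofReal |f s - f a|
        ≤ ∑ k ∈ Finset.range (n s), E (pa^[k] s) := by
      calc ENNReal.ofReal |f s - f a|
          ≤ ENNReal.ofReal (∑ k ∈ Finset.range (n s), |f (pa^[k] s) - f (pa^[k+1] s)|) := by
            apply ENNReal.ofReal_le_ofReal
            have := telescope_abs f pa s (n s)
            rwa [hna s] at this
        _ = ∑ k ∈ Finset.range (n s), ENNReal.ofReal |f (pa^[k] s) - f (pa^[k+1] s)| :=
            ENNReal.ofReal_sum_of_nonneg (fun k _ => abs_nonneg _)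
        _ = ∑ k ∈ Finset.range (n s), E (pa^[k] s) := by
            apply Finset.sum_congr rfl
            intro k hk
            rw [Finset.mem_range] at hk
            rw [hE]
            simp only [hnmin s k hk, if_false]
            rw [Function.iterate_succ_apply']
    have h3 : ∑ k ∈ Finset.range (n s), E (pa^[k] s)
        ≤ ∑' t, (if ∃ k : ℕ, pa^[k] s = t then E t else 0) := by
      have him : ∑ k ∈ Finset.range (n s), E (pa^[k] s)
          = ∑ t ∈ (Finset.range (n s)).image (fun k => pa^[k] s), E t := by
        rw [Finset.sum_image (fun x hx y hy h => hinj s hx hy h)]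
      rw [him]
      have heq : ∑ t ∈ (Finset.range (n s)).image (fun k => pa^[k] s), E t
          = ∑ t ∈ (Finset.range (n s)).image (fun k => pa^[k] s),
              (if ∃ k : ℕ, pa^[k] s = t then E t else 0) := by
        apply Finset.sum_congr rfl
        intro t ht
        rw [Finset.mem_image] at ht
        obtain ⟨k, _, hk⟩ := ht
        rw [if_pos ⟨k, hk⟩]
      rw [heq]
      exact ENNReal.sum_le_tsum _
    calc ENNReal.ofReal |f s - f a| * ENNReal.ofReal (μ s)
        ≤ (∑' t, (if ∃ k : ℕ, pa^[k] s = t then E t else 0)) * ENNReal.ofReal (μ s) :=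
          mul_le_mul_left (le_trans h2 h3) _
      _ = ∑' t, H s t := by rw [ENNReal.tsum_mul_right]
  -- Claim C
  have claimC : ∀ t, (∑' s, H s t)
      ≤ ENNReal.ofReal c * ENNReal.ofReal (gradLen G f t * μ t) := by
    intro t
    have hswap : ∀ s, H s t = E t * (Set.indicator (shadow pa t)
        (fun s => ENNReal.ofReal (μ s)) s) := by
      intro s
      rw [hH]
      simp only [Set.indicator_apply]
      by_cases hmem : ∃ k : ℕ, pa^[k] s = t
      · rw [if_pos hmem, if_pos (show s ∈ shadow pa t from hmem)]
      · rw [if_neg hmem, if_neg (show s ∉ shadow pa t from hmem), zero_mul, mul_zero]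
    calc (∑' s, H s t)
        = E t * ∑' s, Set.indicator (shadow pa t) (fun s => ENNReal.ofReal (μ s)) s := by
          simp_rw [hswap]; rw [ENNReal.tsum_mul_left]
      _ = E t * ∑' s : shadow pa t, ENNReal.ofReal (μ s.1) := by
          rw [← tsum_subtype]
      _ = E t * ENNReal.ofReal (∑' s : shadow pa t, μ s.1) := by
          have hsub : Summable fun s : shadow pa t => μ s.1 := hμsum.subtype _
          rw [ENNReal.ofReal_tsum_of_nonneg (f := fun s : shadow pa t => μ s.1) (fun s => (hμpos s.1).le) hsub]
      _ ≤ E t * ENNReal.ofReal (c * μ t) :=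
          mul_le_mul_right (ENNReal.ofReal_le_ofReal (hjohn t)) _
      _ ≤ ENNReal.ofReal c * ENNReal.ofReal (gradLen G f t * μ t) := by
          by_cases ha : t = a
          · have hEa : E t = 0 := by rw [hE]; simp [ha]
            rw [hEa, zero_mul]; exact zero_le
          · have hEt : E t = ENNReal.ofReal |f t - f (pa t)| := by rw [hE]; simp [ha]
            rw [hEt]
            have hadj : G.Adj t (pa t) := htree t ha
            have hsum : Summable fun s : {s : V // G.Adj t s} => |f s.1 - f t| := by
              have : Finite {s : V // G.Adj t s} := (hlf t).to_subtype
              exact Summable.of_finite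
            have hle : |f t - f (pa t)| ≤ gradLen G f t := by
              rw [abs_sub_comm]
              exact hsum.le_tsum ⟨pa t, hadj⟩ (fun j _ => abs_nonneg _)
            calc ENNReal.ofReal |f t - f (pa t)| * ENNReal.ofReal (c * μ t)
                ≤ ENNReal.ofReal (gradLen G f t) * ENNReal.ofReal (c * μ t) :=
                  mul_le_mul_left (ENNReal.ofReal_le_ofReal hle) _
              _ = ENNReal.ofReal c * ENNReal.ofReal (gradLen G f t * μ t) := by
                  rw [← ENNReal.ofReal_mul (hgradnn t), ← ENNReal.ofReal_mul hc.le]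
                  ring_nf
  -- Step 1 in ℝ
  have hgsum : Summable fun s => |f s - f a| * μ s := by
    apply Summable.of_nonneg_of_le (fun s => mul_nonneg (abs_nonneg _) (hμpos s).le)
      (fun s => ?_) (hf.add (hμsum.mul_left |f a|))
    have : |f s - f a| ≤ |f s| + |f a| := abs_sub (f s) (f a)
    have := mul_le_mul_of_nonneg_right this (hμpos s).le
    nlinarith [ (hμpos s).le ]
  have hfμ : Summable fun s => f s * μ s := by
    apply Summable.of_abs
    have : (fun s => |f s * μ s|) = fun s => |f s| * μ s := by
      funext s; rw [abs_mul, abs_of_pos (hμpos s)]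
    rwa [this]
  have step1 : (∑' s, |f s| * μ s) ≤ 2 * ∑' s, |f s - f a| * μ s := by
    have h1 : (∑' s, |f s| * μ s) ≤ (∑' s, |f s - f a| * μ s) + |f a| * ∑' s, μ s := by
      rw [← tsum_mul_left, ← Summable.tsum_add hgsum (hμsum.mul_left |f a|)]
      apply Summable.tsum_le_tsum _ hf (hgsum.add (hμsum.mul_left |f a|))
      intro s
      have h := abs_sub_abs_le_abs_sub (f s) (f a)
      nlinarith [(hμpos s).le, abs_nonneg (f s - f a), abs_nonneg (f a),
        abs_sub_le (f s) (f a) 0]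
    have h2 : |f a| * (∑' s, μ s) ≤ ∑' s, |f s - f a| * μ s := by
      have hc1 : (∑' s, (f a - f s) * μ s) = f a * ∑' s, μ s := by
        have : (fun s => (f a - f s) * μ s) = fun s => f a * μ s - f s * μ s := by
          funext s; ring
        rw [this, Summable.tsum_sub (hμsum.mul_left (f a)) hfμ, hmean, tsum_mul_left, sub_zero]
      have habs : |f a * ∑' s, μ s| = |f a| * ∑' s, μ s := by
        rw [abs_mul, abs_of_nonneg (tsum_nonneg (fun s => (hμpos s).le))]
      rw [← habs, ← hc1]
      have hnorm : Summable fun s => ‖(f a - f s) * μ s‖ := by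
        have heqn : (fun s => ‖(f a - f s) * μ s‖) = fun s => |f s - f a| * μ s := by
          funext s
          rw [Real.norm_eq_abs, abs_mul, abs_of_pos (hμpos s), abs_sub_comm]
        rwa [heqn]
      calc |∑' s, (f a - f s) * μ s| = ‖∑' s, (f a - f s) * μ s‖ := (Real.norm_eq_abs _).symm
        _ ≤ ∑' s, ‖(f a - f s) * μ s‖ := norm_tsum_le_tsum_norm hnorm
        _ = ∑' s, |f s - f a| * μ s := by
            apply tsum_congr; intro s
            rw [Real.norm_eq_abs, abs_mul, abs_of_pos (hμpos s), abs_sub_comm]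
    linarith
  -- assemble
  have lhs_eq : (∑' s : V, ENNReal.ofReal (|f s| * μ s))
      = ENNReal.ofReal (∑' s, |f s| * μ s) :=
    (ENNReal.ofReal_tsum_of_nonneg (fun s => mul_nonneg (abs_nonneg _) (hμpos s).le) hf).symm
  have mid_eq : ENNReal.ofReal (∑' s, |f s - f a| * μ s)
      = ∑' s, ENNReal.ofReal (|f s - f a| * μ s) :=
    ENNReal.ofReal_tsum_of_nonneg (fun s => mul_nonneg (abs_nonneg _) (hμpos s).le) hgsum
  calc (∑' s : V, ENNReal.ofReal (|f s| * μ s))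
      = ENNReal.ofReal (∑' s, |f s| * μ s) := lhs_eq
    _ ≤ ENNReal.ofReal (2 * ∑' s, |f s - f a| * μ s) := ENNReal.ofReal_le_ofReal step1
    _ = 2 * ENNReal.ofReal (∑' s, |f s - f a| * μ s) := by
        rw [ENNReal.ofReal_mul (by norm_num : (0:ℝ) ≤ 2), ENNReal.ofReal_ofNat]
    _ = 2 * ∑' s, ENNReal.ofReal (|f s - f a| * μ s) := by rw [mid_eq]
    _ ≤ 2 * ∑' s, ∑' t, H s t := by
        gcongr with s
        exact claimA s
    _ = 2 * ∑' t, ∑' s, H s t := by rw [ENNReal.tsum_comm]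
    _ ≤ 2 * ∑' t, (ENNReal.ofReal c * ENNReal.ofReal (gradLen G f t * μ t)) := by
        gcongr with t
        exact claimC t
    _ = ENNReal.ofReal (2 * c) * ∑' t : V, ENNReal.ofReal (gradLen G f t * μ t) := by
        rw [ENNReal.tsum_mul_left, ENNReal.ofReal_mul (by norm_num : (0:ℝ) ≤ 2),
          ENNReal.ofReal_ofNat, mul_assoc]
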